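/- Fix r > 0 and work in ℝ² with coordinates. Let D₁ be the closed disk of radius r centered at c₁ = (−√3·r/2, 0) and D₂ the closed disk of radius r centered at c₂ = (√3·r/2, 0) (these two disks have lens angle exactly 2π/3). Let P = {c₁, c₂, (0, r), (0, −r)}. Then every closed disk F of radius at least r that intersects both D₁ and D₂ contains at least one point of P. -/
import Mathlib

section Aux

set_option maxHeartbeats 1000000

private lemma case1' (r R a x y : ℝ) (hr : 0 < r) (hR : r ≤ R) (ha : a^2 = 3*r^2/4) (ha0 : 0 ≤ a)
    (hx : 0 ≤ x) (hy : 0 ≤ y) (h1 : (x+a)^2 + y^2 ≤ (R+r)^2)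
    (hL : 2*r*y - 2*a*x ≤ r^2/4) :
    (x-a)^2 + y^2 ≤ R^2 := by
  rcases le_or_gt (2*R*r + r^2) (4*a*x) with hA | hB
  · nlinarith [ha]
  · have hy2 : (2*r*y)^2 ≤ (r^2/4 + 2*a*x)^2 := by
      have h0 : 0 ≤ 2*r*y := by positivity
      have h1' : 2*r*y ≤ r^2/4 + 2*a*x := by linarith
      nlinarith
    have hax : 0 ≤ a*x := mul_nonneg ha0 hx
    have hx2 : 3*r^2*x^2 = 4*(a*x)^2 := by nlinarith [ha]
    nlinarith [mul_nonneg hax (by linarith : 0 ≤ 2*R*r + r^2 - 4*(a*x)),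
      mul_nonneg (by linarith : (0:ℝ) ≤ 2*R*r + r^2 - 4*(a*x)) (mul_nonneg hr.le (by linarith : (0:ℝ) ≤ R - r)),
      mul_nonneg (by linarith : (0:ℝ) ≤ R - r) (by linarith : (0:ℝ) ≤ R + r),
      mul_nonneg (by linarith : (0:ℝ) ≤ R - r) hr.le, sq_nonneg r, sq_nonneg (R-r)]

set_option maxHeartbeats 2000000 in
private lemma case2' (r R a x y : ℝ) (hr : 0 < r) (hR : r ≤ R) (ha : a^2 = 3*r^2/4) (ha0 : 0 ≤ a)
    (hx : 0 ≤ x) (hy : 0 ≤ y) (h1 : (x+a)^2 + y^2 ≤ (R+r)^2)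
    (hL : r^2/4 ≤ 2*r*y - 2*a*x) :
    x^2 + (y-r)^2 ≤ R^2 := by
  rcases le_or_gt (2*R*r + 5/4*r^2) (2*a*x + 2*r*y) with hA | hB
  · nlinarith [ha, mul_nonneg ha0 hx]
  · have hax : 0 ≤ 2*a*x := by positivity
    have hprod : (2*a*x)^2 ≤ (2*r*y - r^2/4) * (2*R*r + 5/4*r^2 - 2*r*y) := by
      nlinarith [mul_nonneg hax (by linarith : (0:ℝ) ≤ 2*r*y - r^2/4 - 2*a*x),
        mul_nonneg (by linarith : (0:ℝ) ≤ 2*r*y - r^2/4) (by linarith : (0:ℝ) ≤ 2*R*r + 5/4*r^2 - 2*r*y - 2*a*x)]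
    have hx2 : 3*r^2*x^2 = 4*(a*x)^2 := by nlinarith [ha]
    rcases le_or_gt R (3*r) with hc | hc
    · nlinarith [sq_nonneg (r*y - (2*R*r - 3/2*r^2)),
        mul_nonneg (mul_nonneg (by linarith : (0:ℝ) ≤ R - r) (by linarith : (0:ℝ) ≤ 3*r - R)) (sq_nonneg r),
        mul_nonneg (mul_nonneg hr.le (by linarith : (0:ℝ) ≤ R - r)) (sq_nonneg r), sq_nonneg (r*r)]
    · have hE : r*y ≤ R*r + 5/8*r^2 := by nlinarith
      nlinarith [mul_nonneg (by linarith : (0:ℝ) ≤ R*r + 5/8*r^2 - r*y)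
          (by nlinarith : (0:ℝ) ≤ 4*R*r - 3*r^2 - (r*y + R*r + 5/8*r^2)),
        mul_nonneg (mul_nonneg hr.le (by linarith : (0:ℝ) ≤ R - r)) (sq_nonneg r),
        mul_nonneg (mul_nonneg hr.le hr.le) (mul_nonneg hr.le (by linarith : (0:ℝ) ≤ R))]

private lemma key' (r R a x y : ℝ) (hr : 0 < r) (hR : r ≤ R) (ha : a^2 = 3*r^2/4) (ha0 : 0 ≤ a)
    (hx : 0 ≤ x) (hy : 0 ≤ y) (h1 : (x+a)^2 + y^2 ≤ (R+r)^2) :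
    (x-a)^2 + y^2 ≤ R^2 ∨ x^2 + (y-r)^2 ≤ R^2 := by
  rcases le_total (2*r*y - 2*a*x) (r^2/4) with h | h
  · exact Or.inl (case1' r R a x y hr hR ha ha0 hx hy h1 h)
  · exact Or.inr (case2' r R a x y hr hR ha ha0 hx hy h1 h)

end Aux

/-- The point of `ℝ²` with the given coordinates. -/
noncomputable def planePt (x y : ℝ) : EuclideanSpace ℝ (Fin 2) :=
  (WithLp.equiv 2 (Fin 2 → ℝ)).symm ![x, y]

private lemma dist_sq' (f : EuclideanSpace ℝ (Fin 2)) (u v : ℝ) :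
    dist f (planePt u v) ^ 2 = (f 0 - u)^2 + (f 1 - v)^2 := by
  rw [EuclideanSpace.dist_eq, Real.sq_sqrt (by positivity)]
  simp [Fin.sum_univ_two, Real.dist_eq, sq_abs]
  rfl

private lemma mem_of_sq' (f p : EuclideanSpace ℝ (Fin 2)) (R : ℝ) (hR : 0 ≤ R)
    (h : dist f p ^ 2 ≤ R ^ 2) : p ∈ Metric.closedBall f R := by
  rw [Metric.mem_closedBall, dist_comm]
  nlinarith [dist_nonneg (x := f) (y := p)]

private lemma dist_le_of_inter' (f c : EuclideanSpace ℝ (Fin 2)) (R r : ℝ)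
    (h : (Metric.closedBall f R ∩ Metric.closedBall c r).Nonempty) : dist f c ≤ R + r := by
  obtain ⟨z, hz1, hz2⟩ := h
  calc dist f c ≤ dist f z + dist z c := dist_triangle f z c
    _ ≤ R + r := add_le_add (by rw [dist_comm]; exact Metric.mem_closedBall.1 hz1) hz2

set_option maxHeartbeats 2000000 in
/-- **Lemma (four points for two disks of equal radius and lens angle `2π/3`).**
Fix `r > 0`.  Let `D₁`, `D₂` be the closed disks of radius `r` centered at
`c₁ = (−√3·r/2, 0)` and `c₂ = (√3·r/2, 0)` (these have lens angle exactly `2π/3`),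
and let `P = {c₁, c₂, (0, r), (0, −r)}`.  Then every closed disk `F` of radius at
least `r` intersecting both `D₁` and `D₂` contains a point of `P`. -/
theorem four_points_stab_disks_meeting_two_lens_disks
    (r : ℝ) (hr : 0 < r) :
    ∀ (f : EuclideanSpace ℝ (Fin 2)) (R : ℝ), r ≤ R →
      (Metric.closedBall f R ∩ Metric.closedBall (planePt (-(Real.sqrt 3 * r / 2)) 0) r).Nonempty →
      (Metric.closedBall f R ∩ Metric.closedBall (planePt (Real.sqrt 3 * r / 2) 0) r).Nonempty →
      ∃ p ∈ ({planePt (-(Real.sqrt 3 * r / 2)) 0, planePt (Real.sqrt 3 * r / 2) 0,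
              planePt 0 r, planePt 0 (-r)} : Set (EuclideanSpace ℝ (Fin 2))),
        p ∈ Metric.closedBall f R := by
  intro f R hR h₁ h₂
  have hR0 : (0:ℝ) ≤ R := le_trans hr.le hR
  set s : ℝ := Real.sqrt 3 * r / 2 with hs_def
  have h3 : Real.sqrt 3 ^ 2 = 3 := Real.sq_sqrt (by norm_num)
  have hs : s^2 = 3*r^2/4 := by rw [hs_def, div_pow, mul_pow, h3]; ring
  have hs0 : 0 ≤ s := by positivity
  set x : ℝ := f 0 with hx_def
  set y : ℝ := f 1 with hy_def
  have d1 : dist f (planePt (-s) 0) ≤ R + r := dist_le_of_inter' f _ R r h₁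
  have d2 : dist f (planePt s 0) ≤ R + r := dist_le_of_inter' f _ R r h₂
  have e1 : (x + s)^2 + y^2 ≤ (R + r)^2 := by
    have := pow_le_pow_left₀ dist_nonneg d1 2
    rw [dist_sq'] at this
    nlinarith [this]
  have e2 : (x - s)^2 + y^2 ≤ (R + r)^2 := by
    have := pow_le_pow_left₀ dist_nonneg d2 2
    rw [dist_sq'] at this
    nlinarith [this]
  rcases le_total 0 x with hx | hx <;> rcases le_total 0 y with hy | hy
  · rcases key' r R s x y hr hR hs hs0 hx hy e1 with h | h
    · exact ⟨planePt s 0, by simp, mem_of_sq' f _ R hR0 (by rw [dist_sq']; nlinarith [h])⟩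
    · exact ⟨planePt 0 r, by simp, mem_of_sq' f _ R hR0 (by rw [dist_sq']; nlinarith [h])⟩
  · rcases key' r R s x (-y) hr hR hs hs0 hx (by linarith) (by nlinarith [e1]) with h | h
    · exact ⟨planePt s 0, by simp, mem_of_sq' f _ R hR0 (by rw [dist_sq']; nlinarith [h])⟩
    · exact ⟨planePt 0 (-r), by simp, mem_of_sq' f _ R hR0 (by rw [dist_sq']; nlinarith [h])⟩
  · rcases key' r R s (-x) y hr hR hs hs0 (by linarith) hy (by nlinarith [e2]) with h | h
    · exact ⟨planePt (-s) 0, by simp, mem_of_sq' f _ R hR0 (by rw [dist_sq']; nlinarith [h])⟩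
    · exact ⟨planePt 0 r, by simp, mem_of_sq' f _ R hR0 (by rw [dist_sq']; nlinarith [h])⟩
  · rcases key' r R s (-x) (-y) hr hR hs hs0 (by linarith) (by linarith) (by nlinarith [e2]) with h | h
    · exact ⟨planePt (-s) 0, by simp, mem_of_sq' f _ R hR0 (by rw [dist_sq']; nlinarith [h])⟩
    · exact ⟨planePt 0 (-r), by simp, mem_of_sq' f _ R hR0 (by rw [dist_sq']; nlinarith [h])⟩
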